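/- arXiv:cond-mat/0201091 — 2 statements merged into one kernel-verified Lean document; each statement's English description precedes it below -/
import Mathlib

section
/- For every natural number N ≥ 1 and every real λ₀ with 0 ≤ λ₀ < 1, the quantity (1/(2N))·ln( 2^{-2N} · Σ_{σ,σ' ∈ {−1,1}^N} exp( (λ₀ N / 2)·q(σ,σ')² ) ) is at most (1/(4N))·ln(1/(1−λ₀)), where q(σ,σ') = (1/N)·Σᵢ σᵢ σ'ᵢ. -/
/-- Spin value of a Boolean configuration entry. -/
def spin (b : Bool) : ℝ := if b then 1 else -1

/-- Overlap of two spin configurations. -/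
noncomputable def overlap (N : ℕ) (σ σ' : Fin N → Bool) : ℝ :=
    (1 / (N : ℝ)) * ∑ i, spin (σ i) * spin (σ' i)

open MeasureTheory Real

lemma gauss_lin_integrable {b : ℝ} (hb : 0 < b) (c : ℝ) :
    Integrable (fun x : ℝ => Real.exp (-b * x ^ 2 + c * x)) := by
  have h : ∀ x : ℝ, -b * x ^ 2 + c * x = -b * (x - c / (2 * b)) ^ 2 + c ^ 2 / (4 * b) := by
    intro x; field_simp; ring
  simp_rw [h, Real.exp_add]
  exact ((integrable_exp_neg_mul_sq hb).comp_sub_right (c / (2 * b))).mul_const _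

lemma gauss_lin_integral {b : ℝ} (hb : 0 < b) (c : ℝ) :
    ∫ x : ℝ, Real.exp (-b * x ^ 2 + c * x)
      = Real.sqrt (π / b) * Real.exp (c ^ 2 / (4 * b)) := by
  have h : ∀ x : ℝ, -b * x ^ 2 + c * x = -b * (x - c / (2 * b)) ^ 2 + c ^ 2 / (4 * b) := by
    intro x; field_simp; ring
  simp_rw [h, Real.exp_add]
  rw [MeasureTheory.integral_mul_const,
    integral_sub_right_eq_self (fun x : ℝ => Real.exp (-b * x ^ 2)) (c / (2 * b)),
    integral_gaussian]

lemma sum_prod_eq (N : ℕ) (f : Bool × Bool → ℝ) :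
    ∑ p : (Fin N → Bool) × (Fin N → Bool), ∏ i, f (p.1 i, p.2 i)
      = (∑ c : Bool × Bool, f c) ^ N := by
  have h1 : (∑ c : Bool × Bool, f c) ^ N = ∏ _i : Fin N, ∑ c : Bool × Bool, f c := by
    simp
  rw [h1, Fintype.prod_sum (κ := fun _ : Fin N => Bool × Bool) (fun _ c => f c)]
  exact (Fintype.sum_equiv (Equiv.arrowProdEquivProdArrow (Fin N) (fun _ => Bool) (fun _ => Bool)) _ _
    (fun g => by simp [Equiv.arrowProdEquivProdArrow])).symm

theorem coupled_free_energy_bound (N : ℕ) (hN : 1 ≤ N) (l0 : ℝ) (h0 : 0 ≤ l0) (h1 : l0 < 1) :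
    (1 / (2 * (N : ℝ))) *
      Real.log ((2 : ℝ) ^ (-(2 * (N : ℤ))) *
        ∑ p : (Fin N → Bool) × (Fin N → Bool),
          Real.exp (l0 * N / 2 * (overlap N p.1 p.2) ^ 2))
    ≤ (1 / (4 * (N : ℝ))) * Real.log (1 / (1 - l0)) := by
  have hNR : (0 : ℝ) < N := by exact_mod_cast hN
  have hNne : (N : ℝ) ≠ 0 := ne_of_gt hNR
  rcases eq_or_lt_of_le h0 with h0' | h0'
  · -- l0 = 0
    subst h0'
    have hsum : ∑ p : (Fin N → Bool) × (Fin N → Bool),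
        Real.exp (0 * N / 2 * (overlap N p.1 p.2) ^ 2) = (2 : ℝ) ^ (2 * N) := by
      simp [Finset.card_univ, pow_mul, mul_comm]
      ring
    rw [hsum]
    have : (2 : ℝ) ^ (-(2 * (N : ℤ))) * (2 : ℝ) ^ (2 * N) = 1 := by
      rw [zpow_neg, ← zpow_natCast (2 : ℝ) (2 * N)]
      push_cast
      rw [inv_mul_cancel₀ (by positivity)]
    rw [this]
    simp
  · -- 0 < l0
    have hl0 : (0 : ℝ) < l0 := h0'
    have h1l : (0 : ℝ) < 1 - l0 := by linarith
    set b : ℝ := N / (2 * l0) with hbdef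
    have hb : 0 < b := by positivity
    set b2 : ℝ := N * (1 - l0) / (2 * l0) with hb2def
    have hb2 : 0 < b2 := by positivity
    have hb2b : b2 = b * (1 - l0) := by rw [hbdef, hb2def]; ring
    have hsqb : (0 : ℝ) < Real.sqrt (π / b) := Real.sqrt_pos.2 (by positivity)
    set S : (Fin N → Bool) × (Fin N → Bool) → ℝ :=
      fun p => ∑ i, spin (p.1 i) * spin (p.2 i) with hSdef
    -- rewrite the exponent
    have hexp : ∀ p : (Fin N → Bool) × (Fin N → Bool),
        l0 * N / 2 * (overlap N p.1 p.2) ^ 2 = (S p) ^ 2 / (4 * b) := by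
      intro p
      rw [overlap, hbdef]
      field_simp
      ring
    -- linearization
    have hlin : ∀ p : (Fin N → Bool) × (Fin N → Bool),
        Real.exp (l0 * N / 2 * (overlap N p.1 p.2) ^ 2)
          = (Real.sqrt (π / b))⁻¹ * ∫ x : ℝ, Real.exp (-b * x ^ 2 + S p * x) := by
      intro p
      rw [gauss_lin_integral hb (S p), hexp p, ← mul_assoc, inv_mul_cancel₀ (ne_of_gt hsqb),
        one_mul]
    set K : ℝ → ℝ := fun x => ∑ c : Bool × Bool, Real.exp (spin c.1 * spin c.2 * x) with hKdef
    have hKval : ∀ x : ℝ, K x = 2 * Real.exp x + 2 * Real.exp (-x) := by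
      intro x
      rw [hKdef]
      simp [Fintype.sum_prod_type, spin]
      ring
    have hKnonneg : ∀ x : ℝ, 0 ≤ K x := by
      intro x; rw [hKval x]; positivity
    have hKle : ∀ x : ℝ, K x ≤ 4 * Real.exp (x ^ 2 / 2) := by
      intro x
      rw [hKval x]
      have := Real.cosh_le_exp_half_sq x
      rw [Real.cosh_eq] at this
      linarith
    -- sum of the integrands
    have hsum_int : ∀ x : ℝ,
        ∑ p : (Fin N → Bool) × (Fin N → Bool), Real.exp (-b * x ^ 2 + S p * x)
          = Real.exp (-b * x ^ 2) * (K x) ^ N := by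
      intro x
      have : ∀ p : (Fin N → Bool) × (Fin N → Bool),
          Real.exp (-b * x ^ 2 + S p * x)
            = Real.exp (-b * x ^ 2) * ∏ i, Real.exp (spin (p.1 i) * spin (p.2 i) * x) := by
        intro p
        rw [Real.exp_add, hSdef, Finset.sum_mul]
        rw [Real.exp_sum]
      simp_rw [this, ← Finset.mul_sum]
      congr 1
      exact sum_prod_eq N (fun c => Real.exp (spin c.1 * spin c.2 * x))
    -- main sum equals constant times an integral
    have hmain : ∑ p : (Fin N → Bool) × (Fin N → Bool),
        Real.exp (l0 * N / 2 * (overlap N p.1 p.2) ^ 2)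
          = (Real.sqrt (π / b))⁻¹ * ∫ x : ℝ, Real.exp (-b * x ^ 2) * (K x) ^ N := by
      simp_rw [hlin]
      rw [← Finset.mul_sum]
      congr 1
      rw [← MeasureTheory.integral_finset_sum _ (fun p _ => gauss_lin_integrable hb (S p))]
      congr 1
      ext x
      exact hsum_int x
    -- bound the integral
    have hint_le : ∫ x : ℝ, Real.exp (-b * x ^ 2) * (K x) ^ N
        ≤ 4 ^ N * Real.sqrt (π / b2) := by
      have hpt : ∀ x : ℝ, Real.exp (-b * x ^ 2) * (K x) ^ N
          ≤ 4 ^ N * Real.exp (-b2 * x ^ 2) := by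
        intro x
        have h2 : (K x) ^ N ≤ (4 * Real.exp (x ^ 2 / 2)) ^ N :=
          pow_le_pow_left₀ (hKnonneg x) (hKle x) N
        have harg : -b * x ^ 2 + (N : ℝ) * (x ^ 2 / 2) = -b2 * x ^ 2 := by
          rw [hb2b, hbdef]; field_simp; ring
        have e1 : Real.exp (-b * x ^ 2) * Real.exp ((N : ℝ) * (x ^ 2 / 2))
            = Real.exp (-b2 * x ^ 2) := by
          rw [← Real.exp_add, harg]
        have h3 : Real.exp (-b * x ^ 2) * (4 * Real.exp (x ^ 2 / 2)) ^ N
            = 4 ^ N * Real.exp (-b2 * x ^ 2) := by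
          calc Real.exp (-b * x ^ 2) * (4 * Real.exp (x ^ 2 / 2)) ^ N
              = 4 ^ N * (Real.exp (-b * x ^ 2) * Real.exp ((N : ℝ) * (x ^ 2 / 2))) := by
                rw [mul_pow, ← Real.exp_nat_mul]; ring
            _ = 4 ^ N * Real.exp (-b2 * x ^ 2) := by rw [e1]
        calc Real.exp (-b * x ^ 2) * (K x) ^ N
            ≤ Real.exp (-b * x ^ 2) * (4 * Real.exp (x ^ 2 / 2)) ^ N := by
              exact mul_le_mul_of_nonneg_left h2 (Real.exp_nonneg _)
          _ = 4 ^ N * Real.exp (-b2 * x ^ 2) := h3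
      have hgint : Integrable (fun x : ℝ => 4 ^ N * Real.exp (-b2 * x ^ 2)) :=
        (integrable_exp_neg_mul_sq hb2).const_mul _
      calc ∫ x : ℝ, Real.exp (-b * x ^ 2) * (K x) ^ N
          ≤ ∫ x : ℝ, 4 ^ N * Real.exp (-b2 * x ^ 2) := by
            apply integral_mono_of_nonneg
            · exact Filter.Eventually.of_forall fun x => by positivity
            · exact hgint
            · exact Filter.Eventually.of_forall hpt
        _ = 4 ^ N * Real.sqrt (π / b2) := by
            rw [MeasureTheory.integral_const_mul, integral_gaussian]
    -- the whole expression is bounded by sqrt(1/(1-l0))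
    have hA_le : (2 : ℝ) ^ (-(2 * (N : ℤ))) *
        ∑ p : (Fin N → Bool) × (Fin N → Bool),
          Real.exp (l0 * N / 2 * (overlap N p.1 p.2) ^ 2)
        ≤ Real.sqrt (1 / (1 - l0)) := by
      rw [hmain]
      have hc : (0 : ℝ) ≤ (2 : ℝ) ^ (-(2 * (N : ℤ))) * (Real.sqrt (π / b))⁻¹ := by positivity
      have step : (2 : ℝ) ^ (-(2 * (N : ℤ))) *
          ((Real.sqrt (π / b))⁻¹ * ∫ x : ℝ, Real.exp (-b * x ^ 2) * (K x) ^ N)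
          ≤ (2 : ℝ) ^ (-(2 * (N : ℤ))) * ((Real.sqrt (π / b))⁻¹ * (4 ^ N * Real.sqrt (π / b2))) := by
        apply mul_le_mul_of_nonneg_left _ (by positivity)
        exact mul_le_mul_of_nonneg_left hint_le (by positivity)
      refine step.trans_eq ?_
      have h4 : (2 : ℝ) ^ (-(2 * (N : ℤ))) * (4 : ℝ) ^ N = 1 := by
        have hz : (2 : ℝ) ^ (-(2 * (N : ℤ))) = ((4 : ℝ) ^ N)⁻¹ := by
          rw [zpow_neg]
          congr 1
          rw [show (2 * (N : ℤ)) = ((2 * N : ℕ) : ℤ) by push_cast; ring, zpow_natCast,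
            pow_mul]
          norm_num
        rw [hz, inv_mul_cancel₀ (by positivity)]
      have h5 : Real.sqrt (π / b2) = Real.sqrt (1 / (1 - l0)) * Real.sqrt (π / b) := by
        rw [← Real.sqrt_mul (by positivity)]
        congr 1
        rw [hb2b, div_mul_eq_div_div, one_div, inv_mul_eq_div]
      calc (2 : ℝ) ^ (-(2 * (N : ℤ))) * ((Real.sqrt (π / b))⁻¹ * (4 ^ N * Real.sqrt (π / b2)))
          = ((2 : ℝ) ^ (-(2 * (N : ℤ))) * 4 ^ N) * ((Real.sqrt (π / b))⁻¹ * Real.sqrt (π / b2)) := by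
            ring
        _ = (Real.sqrt (π / b))⁻¹ * Real.sqrt (π / b2) := by rw [h4, one_mul]
        _ = Real.sqrt (1 / (1 - l0)) := by
            rw [h5, mul_comm (Real.sqrt (1 / (1 - l0))) (Real.sqrt (π / b)), ← mul_assoc,
              inv_mul_cancel₀ (ne_of_gt hsqb), one_mul]
    -- positivity of the expression
    have hApos : (0 : ℝ) < (2 : ℝ) ^ (-(2 * (N : ℤ))) *
        ∑ p : (Fin N → Bool) × (Fin N → Bool),
          Real.exp (l0 * N / 2 * (overlap N p.1 p.2) ^ 2) := by
      apply mul_pos (by positivity)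
      exact Finset.sum_pos (fun p _ => Real.exp_pos _) Finset.univ_nonempty
    -- conclude via log monotonicity
    have hlog := Real.log_le_log hApos hA_le
    rw [Real.log_sqrt (by positivity)] at hlog
    calc (1 / (2 * (N : ℝ))) *
          Real.log ((2 : ℝ) ^ (-(2 * (N : ℤ))) *
            ∑ p : (Fin N → Bool) × (Fin N → Bool),
              Real.exp (l0 * N / 2 * (overlap N p.1 p.2) ^ 2))
        ≤ (1 / (2 * (N : ℝ))) * (Real.log (1 / (1 - l0)) / 2) := by
          exact mul_le_mul_of_nonneg_left hlog (by positivity)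
      _ = (1 / (4 * (N : ℝ))) * Real.log (1 / (1 - l0)) := by
          generalize Real.log (1 / (1 - l0)) = L
          field_simp
          ring
end

section
/- For every N ≥ 1 and λ₀ ≥ 0: 2^{-2N}·Σ_{σ,σ' ∈ {−1,1}^N} exp((λ₀ N/2)·q(σ,σ')²) = ∫_ℝ (cosh(z·√(λ₀/N)))^N dμ(z), where q(σ,σ') = (1/N)Σᵢσᵢσ'ᵢ and μ is the standard Gaussian measure. -/
open MeasureTheory ProbabilityTheory
open scoped ENNReal NNReal

lemma gauss_exp_eq (t : ℝ) :
    (fun x : ℝ => gaussianPDFReal 0 1 x * Real.exp (t * x))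
      = fun x : ℝ => ((Real.sqrt (2 * Real.pi))⁻¹ * Real.exp (t^2/2)) *
        Real.exp (-(2⁻¹ : ℝ) * (x - t)^2) := by
  funext x
  simp only [gaussianPDFReal, NNReal.coe_one, mul_one, sub_zero]
  rw [mul_assoc, ← Real.exp_add, mul_assoc, ← Real.exp_add]
  congr 1
  ring

lemma gauss_integrable_exp_vol (t : ℝ) :
    Integrable (fun x : ℝ => gaussianPDFReal 0 1 x * Real.exp (t * x)) := by
  rw [gauss_exp_eq]
  exact ((integrable_exp_neg_mul_sq (by norm_num : (0:ℝ) < 2⁻¹)).comp_sub_right t).const_mul _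

lemma gauss_mgf_vol (t : ℝ) :
    ∫ x : ℝ, gaussianPDFReal 0 1 x * Real.exp (t * x) = Real.exp (t^2/2) := by
  rw [gauss_exp_eq, integral_const_mul,
    integral_sub_right_eq_self (fun x : ℝ => Real.exp (-(2⁻¹ : ℝ) * x^2)) t,
    integral_gaussian, show Real.pi / 2⁻¹ = 2 * Real.pi by ring]
  have h2 : Real.sqrt (2 * Real.pi) ≠ 0 := by positivity
  field_simp

lemma smul_eq_pdf_mul (t : ℝ) :
    (fun x : ℝ => ((gaussianPDFReal 0 1 x).toNNReal : ℝ) • Real.exp (t * x))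
      = fun x : ℝ => gaussianPDFReal 0 1 x * Real.exp (t * x) := by
  funext x
  rw [smul_eq_mul, Real.coe_toNNReal _ (gaussianPDFReal_nonneg 0 1 x)]

lemma gaussianReal_eq_wd :
    gaussianReal 0 1 = MeasureTheory.volume.withDensity
      (fun x => ((gaussianPDFReal 0 1 x).toNNReal : ℝ≥0∞)) := by
  rw [gaussianReal_of_var_ne_zero 0 one_ne_zero]
  rfl

lemma exp_integrable_gauss (t : ℝ) :
    Integrable (fun x : ℝ => Real.exp (t * x)) (gaussianReal 0 1) := by
  rw [gaussianReal_eq_wd,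
    integrable_withDensity_iff_integrable_coe_smul
      (measurable_gaussianPDFReal 0 1).real_toNNReal]
  rw [show (fun x : ℝ => ((gaussianPDFReal 0 1 x).toNNReal : ℝ) • Real.exp (t * x))
      = _ from smul_eq_pdf_mul t]
  exact gauss_integrable_exp_vol t

lemma gauss_mgf (t : ℝ) :
    ∫ x : ℝ, Real.exp (t * x) ∂(gaussianReal 0 1) = Real.exp (t^2/2) := by
  rw [gaussianReal_eq_wd,
    integral_withDensity_eq_integral_smul (measurable_gaussianPDFReal 0 1).real_toNNReal]
  rw [show (fun x : ℝ => ((gaussianPDFReal 0 1 x).toNNReal : ℝ≥0) • Real.exp (t * x))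
      = fun x : ℝ => gaussianPDFReal 0 1 x * Real.exp (t * x) from ?_]
  · exact gauss_mgf_vol t
  · funext x
    rw [NNReal.smul_def, Real.coe_toNNReal _ (gaussianPDFReal_nonneg 0 1 x), smul_eq_mul]

lemma sum_bool_pair (r : ℝ) :
    (∑ b : Bool × Bool, Real.exp (r * (spin b.1 * spin b.2))) = 4 * Real.cosh r := by
  simp only [Fintype.sum_prod_type, Fintype.sum_bool, spin, Real.cosh_eq, if_true,
    Bool.false_eq_true, if_false]
  ring_nf

lemma sum_pairs (N : ℕ) (r : ℝ) :
    ∑ p : (Fin N → Bool) × (Fin N → Bool),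
      ∏ i, Real.exp (r * (spin (p.1 i) * spin (p.2 i)))
      = (4 * Real.cosh r) ^ N := by
  rw [← sum_bool_pair r, ← Fin.prod_const N, Fintype.prod_sum]
  exact (Fintype.sum_equiv (Equiv.arrowProdEquivProdArrow (Fin N) (fun _ => Bool) (fun _ => Bool))
    (fun g => ∏ i, Real.exp (r * (spin (g i).1 * spin (g i).2)))
    (fun p => ∏ i, Real.exp (r * (spin (p.1 i) * spin (p.2 i))))
    (fun g => by simp [Equiv.arrowProdEquivProdArrow])).symm

theorem coupled_partition_gaussian_rep (N : ℕ) (hN : 1 ≤ N) (l0 : ℝ) (h0 : 0 ≤ l0) :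
    (2 : ℝ) ^ (-(2 * (N : ℤ))) *
      ∑ p : (Fin N → Bool) × (Fin N → Bool),
        Real.exp (l0 * N / 2 * (overlap N p.1 p.2) ^ 2)
    = ∫ z : ℝ, (Real.cosh (z * Real.sqrt (l0 / N))) ^ N ∂(gaussianReal 0 1) := by
  have hNR : (0:ℝ) < N := by exact_mod_cast hN
  have hterm : ∀ p : (Fin N → Bool) × (Fin N → Bool),
      Real.exp (l0 * N / 2 * (overlap N p.1 p.2) ^ 2)
        = ∫ z : ℝ, Real.exp ((Real.sqrt (l0 * N) * overlap N p.1 p.2) * z)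
            ∂(gaussianReal 0 1) := by
    intro p
    rw [gauss_mgf]
    congr 1
    rw [mul_pow, Real.sq_sqrt (by positivity)]
    ring
  rw [Finset.sum_congr rfl (fun p _ => hterm p),
    ← integral_finset_sum _ (fun p _ => exp_integrable_gauss _),
    ← integral_const_mul]
  congr 1
  funext z
  have h1 : Real.sqrt (l0 * N) * (1 / N) = Real.sqrt (l0 / N) := by
    rw [show (1:ℝ)/N = Real.sqrt ((1/N)^2) from (Real.sqrt_sq (by positivity)).symm,
      ← Real.sqrt_mul (by positivity)]
    congr 1
    field_simp
  have harg : ∀ p : (Fin N → Bool) × (Fin N → Bool),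
      (Real.sqrt (l0 * N) * overlap N p.1 p.2) * z
        = ∑ i, (z * Real.sqrt (l0 / N)) * (spin (p.1 i) * spin (p.2 i)) := by
    intro p
    rw [overlap, ← Finset.mul_sum, ← h1]
    ring
  have hsum : ∑ p : (Fin N → Bool) × (Fin N → Bool),
      Real.exp ((Real.sqrt (l0 * N) * overlap N p.1 p.2) * z)
      = (4 * Real.cosh (z * Real.sqrt (l0 / N))) ^ N := by
    rw [← sum_pairs N (z * Real.sqrt (l0 / N))]
    exact Finset.sum_congr rfl (fun p _ => by rw [harg p, Real.exp_sum])
  rw [hsum, mul_pow]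
  have h4 : (2:ℝ) ^ (-(2 * (N:ℤ))) * 4 ^ N = 1 := by
    rw [zpow_neg, show ((2:ℝ))^(2*(N:ℤ)) = 4^N from ?_, inv_mul_cancel₀ (by positivity)]
    rw [show (2*(N:ℤ)) = ((2*N : ℕ) : ℤ) by push_cast; ring, zpow_natCast, pow_mul]
    norm_num
  rw [← mul_assoc, h4, one_mul]
end
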